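/- For d ≥ 1, a subset S = {s_1 < ... < s_k} ⊆ {1,...,d}, and 0 ≤ r ≤ d, the number of permutations σ ∈ S_{d+1} with descent set contained in S and σ(d+1) = d+1-r equals the multinomial coefficient binom(s_k; s_k - s_{k-1}, ..., s_2 - s_1, s_1) times binom(d-r, d-s_k). -/

import Mathlib

open Finset

/-- The set of descent positions (0-based: `k ∈ descSet σ` means a descent between
the 1-based positions `k+1` and `k+2`) of a permutation of `Fin n`. -/
def descSet {n : ℕ} (σ : Equiv.Perm (Fin n)) : Finset (Fin n) :=
  Finset.univ.filter (fun k => ∃ m : Fin n, (m : ℕ) = (k : ℕ) + 1 ∧ σ m < σ k)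

/-- The number of descents of a permutation of `Fin n`. -/
def des {n : ℕ} (σ : Equiv.Perm (Fin n)) : ℕ := (descSet σ).card

/-- `A d i j` : the number of permutations `σ` of `{1,…,d}` with `σ(1) = j` and
exactly `i` descents (in particular `A d i j = 0` for `i < 0` or `i ≥ d`). -/
noncomputable def A (d : ℕ) (i : ℤ) (j : ℕ) : ℕ :=
  Nat.card {σ : Equiv.Perm (Fin d) //
    (∀ k : Fin d, (k : ℕ) = 0 → (σ k : ℕ) + 1 = j) ∧ (des σ : ℤ) = i}


section Aux

variable {n j : ℕ}

lemma mem_descSet_iff {n : ℕ} (σ : Equiv.Perm (Fin n)) (p : Fin n) :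
    p ∈ descSet σ ↔ ∃ h : (p : ℕ) + 1 < n, σ ⟨(p : ℕ) + 1, h⟩ < σ p := by
  constructor
  · intro hp
    simp only [descSet, Finset.mem_filter, Finset.mem_univ, true_and] at hp
    obtain ⟨m, hm, hlt⟩ := hp
    refine ⟨hm ▸ m.isLt, ?_⟩
    have : (⟨(p : ℕ) + 1, hm ▸ m.isLt⟩ : Fin n) = m := Fin.ext hm.symm
    rwa [this]
  · rintro ⟨h, hlt⟩
    simp only [descSet, Finset.mem_filter, Finset.mem_univ, true_and]
    exact ⟨⟨(p : ℕ) + 1, h⟩, rfl, hlt⟩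

def MonoTop (j : ℕ) {n : ℕ} (σ : Equiv.Perm (Fin n)) : Prop :=
  ∀ p q : Fin n, j ≤ (p : ℕ) → p < q → σ p < σ q

def topSet (j : ℕ) {n : ℕ} (σ : Equiv.Perm (Fin n)) : Finset (Fin n) :=
  (Finset.univ.filter fun p : Fin n => j ≤ (p : ℕ)).image (⇑σ)

lemma mem_topSet {σ : Equiv.Perm (Fin n)} {x : Fin n} :
    x ∈ topSet j σ ↔ ∃ p : Fin n, j ≤ (p : ℕ) ∧ σ p = x := by
  simp [topSet]

lemma card_filter_ge (hj : j ≤ n) :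
    ((Finset.univ : Finset (Fin n)).filter fun p : Fin n => j ≤ (p : ℕ)).card = n - j := by
  apply Finset.card_eq_of_bijective (fun i hi => ⟨j + i, by omega⟩)
  · intro p hp
    simp only [Finset.mem_filter, Finset.mem_univ, true_and] at hp
    refine ⟨(p : ℕ) - j, by have := p.isLt; omega, Fin.ext ?_⟩
    show j + ((p : ℕ) - j) = (p : ℕ)
    omega
  · intro i hi
    simp only [Finset.mem_filter, Finset.mem_univ, true_and]
    show j ≤ j + i
    omega
  · intro a b ha hb hab
    have : j + a = j + b := congrArg Fin.val hab
    omega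

lemma card_topSet (hj : j ≤ n) (σ : Equiv.Perm (Fin n)) : (topSet j σ).card = n - j := by
  rw [topSet, Finset.card_image_of_injective _ σ.injective, card_filter_ge hj]

lemma card_topSet_compl (hj : j ≤ n) (σ : Equiv.Perm (Fin n)) :
    (topSet j σ)ᶜ.card = j := by
  rw [Finset.card_compl, card_topSet hj, Fintype.card_fin]; omega

lemma compl_card (hj : j ≤ n) {B : Finset (Fin n)} (hB : B.card = n - j) : Bᶜ.card = j := by
  rw [Finset.card_compl, hB, Fintype.card_fin]; omega

lemma orderEmbOfFin_congr {α : Type*} [LinearOrder α] {s t : Finset α} (hst : s = t) {k : ℕ}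
    (hs : s.card = k) (i : Fin k) : s.orderEmbOfFin hs i = t.orderEmbOfFin (hst ▸ hs) i := by
  subst hst; rfl

def buildFun (hj : j ≤ n) (B : Finset (Fin n)) (hB : B.card = n - j)
    (σ' : Equiv.Perm (Fin j)) (p : Fin n) : Fin n :=
  if h : (p : ℕ) < j then
    Bᶜ.orderEmbOfFin (compl_card hj hB) (σ' ⟨(p : ℕ), h⟩)
  else
    B.orderEmbOfFin hB ⟨(p : ℕ) - j, by have := p.isLt; omega⟩

lemma buildFun_injective (hj : j ≤ n) (B : Finset (Fin n)) (hB : B.card = n - j)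
    (σ' : Equiv.Perm (Fin j)) : Function.Injective (buildFun hj B hB σ') := by
  intro p q hpq
  unfold buildFun at hpq
  by_cases hp : (p : ℕ) < j <;> by_cases hq : (q : ℕ) < j
  · rw [dif_pos hp, dif_pos hq] at hpq
    have h1 := (Bᶜ.orderEmbOfFin (compl_card hj hB)).injective hpq
    have h2 := σ'.injective h1
    have h3 := congrArg Fin.val h2
    exact Fin.ext h3
  · rw [dif_pos hp, dif_neg hq] at hpq
    have h1 := Finset.orderEmbOfFin_mem Bᶜ (compl_card hj hB) (σ' ⟨(p : ℕ), hp⟩)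
    have h2 := Finset.orderEmbOfFin_mem B hB ⟨(q : ℕ) - j, by have := q.isLt; omega⟩
    rw [hpq] at h1
    exact absurd h2 (Finset.mem_compl.mp h1)
  · rw [dif_neg hp, dif_pos hq] at hpq
    have h1 := Finset.orderEmbOfFin_mem Bᶜ (compl_card hj hB) (σ' ⟨(q : ℕ), hq⟩)
    have h2 := Finset.orderEmbOfFin_mem B hB ⟨(p : ℕ) - j, by have := p.isLt; omega⟩
    rw [← hpq] at h1
    exact absurd h2 (Finset.mem_compl.mp h1)
  · rw [dif_neg hp, dif_neg hq] at hpq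
    have h1 := (B.orderEmbOfFin hB).injective hpq
    have h2 : (p : ℕ) - j = (q : ℕ) - j := congrArg Fin.val h1
    have := p.isLt; have := q.isLt
    exact Fin.ext (by omega)

noncomputable def buildPerm (hj : j ≤ n) (B : Finset (Fin n)) (hB : B.card = n - j)
    (σ' : Equiv.Perm (Fin j)) : Equiv.Perm (Fin n) :=
  Equiv.ofBijective (buildFun hj B hB σ')
    (Finite.injective_iff_bijective.mp (buildFun_injective hj B hB σ'))

lemma buildPerm_apply_low (hj : j ≤ n) (B : Finset (Fin n)) (hB : B.card = n - j)
    (σ' : Equiv.Perm (Fin j)) (p : Fin n) (h : (p : ℕ) < j) :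
    buildPerm hj B hB σ' p = Bᶜ.orderEmbOfFin (compl_card hj hB) (σ' ⟨(p : ℕ), h⟩) := by
  simp only [buildPerm, Equiv.ofBijective_apply, buildFun, dif_pos h]

lemma buildPerm_apply_top (hj : j ≤ n) (B : Finset (Fin n)) (hB : B.card = n - j)
    (σ' : Equiv.Perm (Fin j)) (p : Fin n) (h : ¬ (p : ℕ) < j) :
    buildPerm hj B hB σ' p = B.orderEmbOfFin hB ⟨(p : ℕ) - j, by have := p.isLt; omega⟩ := by
  simp only [buildPerm, Equiv.ofBijective_apply, buildFun, dif_neg h]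

lemma buildPerm_monoTop (hj : j ≤ n) (B : Finset (Fin n)) (hB : B.card = n - j)
    (σ' : Equiv.Perm (Fin j)) : MonoTop j (buildPerm hj B hB σ') := by
  intro p q hjp hpq
  have hq : j ≤ (q : ℕ) := le_trans hjp (le_of_lt hpq)
  have hpq' : (p : ℕ) < (q : ℕ) := hpq
  rw [buildPerm_apply_top hj B hB σ' p (by omega), buildPerm_apply_top hj B hB σ' q (by omega)]
  exact (B.orderEmbOfFin hB).strictMono (Fin.mk_lt_mk.mpr (by omega))

lemma topSet_buildPerm (hj : j ≤ n) (B : Finset (Fin n)) (hB : B.card = n - j)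
    (σ' : Equiv.Perm (Fin j)) : topSet j (buildPerm hj B hB σ') = B := by
  ext b
  rw [mem_topSet]
  constructor
  · rintro ⟨p, hp, rfl⟩
    rw [buildPerm_apply_top hj B hB σ' p (by omega)]
    exact Finset.orderEmbOfFin_mem B hB _
  · intro hb
    have : b ∈ Set.range (B.orderEmbOfFin hB) := by
      rw [Finset.range_orderEmbOfFin]; exact hb
    obtain ⟨i, hi⟩ := this
    have hin : j + (i : ℕ) < n := by have := i.isLt; omega
    refine ⟨⟨j + (i : ℕ), hin⟩, Nat.le_add_right j _, ?_⟩
    rw [buildPerm_apply_top hj B hB σ' _ (by show ¬ j + (i : ℕ) < j; omega)]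
    rw [← hi]
    congr 1
    exact Fin.ext (show j + (i : ℕ) - j = (i : ℕ) by omega)

lemma low_mem_compl (hj : j ≤ n) (σ : Equiv.Perm (Fin n)) (x : Fin j) :
    σ (Fin.castLE hj x) ∈ (topSet j σ)ᶜ := by
  rw [Finset.mem_compl, mem_topSet]
  rintro ⟨p, hp, heq⟩
  have h1 := σ.injective heq
  have h2 : (p : ℕ) = (x : ℕ) := congrArg Fin.val h1
  have := x.isLt
  omega

lemma lowFun_injective (hj : j ≤ n) (σ : Equiv.Perm (Fin n)) :
    Function.Injective (fun x : Fin j =>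
      ((topSet j σ)ᶜ.orderIsoOfFin (card_topSet_compl hj σ)).symm
        ⟨σ (Fin.castLE hj x), low_mem_compl hj σ x⟩) := by
  intro x y hxy
  simp only at hxy
  have h1 := ((topSet j σ)ᶜ.orderIsoOfFin (card_topSet_compl hj σ)).symm.injective hxy
  have h2 : σ (Fin.castLE hj x) = σ (Fin.castLE hj y) := Subtype.ext_iff.mp h1
  exact Fin.castLE_injective hj (σ.injective h2)

noncomputable def lowPerm (hj : j ≤ n) (σ : Equiv.Perm (Fin n)) : Equiv.Perm (Fin j) :=
  Equiv.ofBijective _ (Finite.injective_iff_bijective.mp (lowFun_injective hj σ))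

lemma lowPerm_apply (hj : j ≤ n) (σ : Equiv.Perm (Fin n)) (x : Fin j) :
    lowPerm hj σ x = ((topSet j σ)ᶜ.orderIsoOfFin (card_topSet_compl hj σ)).symm
        ⟨σ (Fin.castLE hj x), low_mem_compl hj σ x⟩ := rfl

lemma lowPerm_lt_iff (hj : j ≤ n) (σ : Equiv.Perm (Fin n)) (x y : Fin j) :
    lowPerm hj σ x < lowPerm hj σ y ↔ σ (Fin.castLE hj x) < σ (Fin.castLE hj y) := by
  rw [lowPerm_apply, lowPerm_apply]
  exact Iff.trans (OrderIso.lt_iff_lt _) Subtype.mk_lt_mk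

lemma lowPerm_buildPerm (hj : j ≤ n) (B : Finset (Fin n)) (hB : B.card = n - j)
    (σ' : Equiv.Perm (Fin j)) : lowPerm hj (buildPerm hj B hB σ') = σ' := by
  set τ := buildPerm hj B hB σ' with hτ
  refine Equiv.ext fun x => ?_
  have hlow : (Fin.castLE hj x : ℕ) < j := x.isLt
  have h1 : ((topSet j τ)ᶜ.orderIsoOfFin (card_topSet_compl hj τ)) (lowPerm hj τ x) =
      ⟨τ (Fin.castLE hj x), low_mem_compl hj τ x⟩ := by
    rw [lowPerm_apply]
    exact OrderIso.apply_symm_apply _ _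
  have h1' : ((topSet j τ)ᶜ.orderEmbOfFin (card_topSet_compl hj τ)) (lowPerm hj τ x) =
      τ (Fin.castLE hj x) := by
    rw [← Finset.coe_orderIsoOfFin_apply, h1]
  have h2 : τ (Fin.castLE hj x) = Bᶜ.orderEmbOfFin (compl_card hj hB) (σ' x) := by
    rw [hτ, buildPerm_apply_low hj B hB σ' _ hlow]
    exact congrArg _ (congrArg σ' (Fin.ext rfl))
  have hset : (topSet j τ)ᶜ = Bᶜ := by rw [hτ, topSet_buildPerm]
  have h3 : Bᶜ.orderEmbOfFin (hset ▸ (card_topSet_compl hj τ)) (lowPerm hj τ x) =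
      Bᶜ.orderEmbOfFin (compl_card hj hB) (σ' x) := by
    rw [← orderEmbOfFin_congr hset (card_topSet_compl hj τ), h1', h2]
  exact Fin.ext (Finset.orderEmbOfFin_eq_orderEmbOfFin_iff.mp h3)

lemma buildPerm_eq (hj : j ≤ n) (σ : Equiv.Perm (Fin n)) (hmono : MonoTop j σ) :
    buildPerm hj (topSet j σ) (card_topSet hj σ) (lowPerm hj σ) = σ := by
  refine Equiv.ext fun p => ?_
  by_cases h : (p : ℕ) < j
  · rw [buildPerm_apply_low hj _ _ _ p h]
    have heq : (lowPerm hj σ) ⟨(p : ℕ), h⟩ =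
        ((topSet j σ)ᶜ.orderIsoOfFin (card_topSet_compl hj σ)).symm
          ⟨σ (Fin.castLE hj ⟨(p : ℕ), h⟩), low_mem_compl hj σ _⟩ := lowPerm_apply hj σ _
    rw [heq, ← Finset.coe_orderIsoOfFin_apply, OrderIso.apply_symm_apply]
    rfl
  · rw [buildPerm_apply_top hj _ _ _ p h]
    have hunique : (fun i : Fin (n - j) =>
        σ (⟨j + (i : ℕ), by have := i.isLt; omega⟩ : Fin n)) =
        ⇑((topSet j σ).orderEmbOfFin (card_topSet hj σ)) := by
      apply Finset.orderEmbOfFin_unique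
      · intro i
        rw [mem_topSet]
        exact ⟨_, Nat.le_add_right j _, rfl⟩
      · intro a b hab
        have hab' : (a : ℕ) < (b : ℕ) := hab
        exact hmono _ _ (Nat.le_add_right j _) (Fin.mk_lt_mk.mpr (by omega))
    rw [← congrFun hunique ⟨(p : ℕ) - j, by have := p.isLt; omega⟩]
    exact congrArg σ (Fin.ext (show j + ((p : ℕ) - j) = (p : ℕ) by omega))

lemma master (hj : j ≤ n) (P : Equiv.Perm (Fin j) → Prop) (Q : Finset (Fin n) → Prop) :
    Nat.card {σ : Equiv.Perm (Fin n) //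
        MonoTop j σ ∧ P (lowPerm hj σ) ∧ Q (topSet j σ)} =
    Nat.card {σ' : Equiv.Perm (Fin j) // P σ'} *
      Nat.card {B : Finset (Fin n) // B.card = n - j ∧ Q B} := by
  rw [← Nat.card_prod]
  refine (Nat.card_eq_of_bijective
    (fun x : {σ' : Equiv.Perm (Fin j) // P σ'} ×
        {B : Finset (Fin n) // B.card = n - j ∧ Q B} =>
      (⟨buildPerm hj x.2.1 x.2.2.1 x.1.1,
        buildPerm_monoTop hj _ _ _,
        by rw [lowPerm_buildPerm]; exact x.1.2,
        by rw [topSet_buildPerm]; exact x.2.2.2⟩ :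
        {σ : Equiv.Perm (Fin n) // MonoTop j σ ∧ P (lowPerm hj σ) ∧ Q (topSet j σ)}))
    ⟨?_, ?_⟩).symm
  · rintro ⟨⟨σ1, h1⟩, ⟨B1, hB1, hQ1⟩⟩ ⟨⟨σ2, h2⟩, ⟨B2, hB2, hQ2⟩⟩ heq
    have heq' : buildPerm hj B1 hB1 σ1 = buildPerm hj B2 hB2 σ2 := congrArg Subtype.val heq
    have hB : B1 = B2 := by
      rw [← topSet_buildPerm hj B1 hB1 σ1, ← topSet_buildPerm hj B2 hB2 σ2, heq']
    subst hB
    have hσ : σ1 = σ2 := by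
      rw [← lowPerm_buildPerm hj B1 hB1 σ1, ← lowPerm_buildPerm hj B1 hB2 σ2, heq']
    subst hσ
    rfl
  · rintro ⟨σ, hmono, hP, hQ⟩
    refine ⟨⟨⟨lowPerm hj σ, hP⟩, ⟨topSet j σ, card_topSet hj σ, hQ⟩⟩, ?_⟩
    exact Subtype.ext (buildPerm_eq hj σ hmono)

lemma monoTop_of_no_desc (σ : Equiv.Perm (Fin n))
    (hnd : ∀ p : Fin n, j ≤ (p : ℕ) → p ∉ descSet σ) : MonoTop j σ := by
  have adj : ∀ p : Fin n, j ≤ (p : ℕ) → ∀ h : (p : ℕ) + 1 < n, σ p < σ ⟨(p : ℕ) + 1, h⟩ := by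
    intro p hjp h
    have hmem := hnd p hjp
    rw [mem_descSet_iff] at hmem
    push_neg at hmem
    have h2 : σ p ≤ σ ⟨(p : ℕ) + 1, h⟩ := hmem h
    rcases lt_or_eq_of_le h2 with h3 | h3
    · exact h3
    · exfalso
      have h4 : p = ⟨(p : ℕ) + 1, h⟩ := σ.injective h3
      have h5 : (p : ℕ) = (p : ℕ) + 1 := congrArg Fin.val h4
      omega
  have key : ∀ m : ℕ, ∀ p q : Fin n, j ≤ (p : ℕ) → (q : ℕ) = (p : ℕ) + (m + 1) →
      σ p < σ q := by
    intro m
    induction m with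
    | zero =>
      intro p q hjp hq
      have hlt : (p : ℕ) + 1 < n := by have := q.isLt; omega
      have := adj p hjp hlt
      have hqe : q = ⟨(p : ℕ) + 1, hlt⟩ := Fin.ext (show (q : ℕ) = (p : ℕ) + 1 by omega)
      rwa [hqe]
    | succ m ih =>
      intro p q hjp hq
      have hq' : (p : ℕ) + (m + 1) < n := by have := q.isLt; omega
      have hp'v : ((⟨(p : ℕ) + (m + 1), hq'⟩ : Fin n) : ℕ) = (p : ℕ) + (m + 1) := rfl
      have h1 := ih p ⟨(p : ℕ) + (m + 1), hq'⟩ hjp hp'v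
      have hlt : ((⟨(p : ℕ) + (m + 1), hq'⟩ : Fin n) : ℕ) + 1 < n := by
        show (p : ℕ) + (m + 1) + 1 < n
        have := q.isLt; omega
      have h2 := adj ⟨(p : ℕ) + (m + 1), hq'⟩ (show j ≤ (p : ℕ) + (m + 1) by omega) hlt
      have hqe : q = ⟨((⟨(p : ℕ) + (m + 1), hq'⟩ : Fin n) : ℕ) + 1, hlt⟩ :=
        Fin.ext (show (q : ℕ) = ((p : ℕ) + (m + 1)) + 1 by omega)
      rw [hqe]
      exact lt_trans h1 h2
  intro p q hjp hpq
  have hpq' : (p : ℕ) < (q : ℕ) := hpq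
  exact key ((q : ℕ) - (p : ℕ) - 1) p q hjp (by omega)

end Aux

section Aux2

variable {n j : ℕ}

lemma descSet_lowPerm_iff (hj : j ≤ n) (σ : Equiv.Perm (Fin n)) (p : Fin j) :
    p ∈ descSet (lowPerm hj σ) ↔ ∃ h : (p : ℕ) + 1 < j,
      σ (Fin.castLE hj ⟨(p : ℕ) + 1, h⟩) < σ (Fin.castLE hj p) := by
  rw [mem_descSet_iff]
  constructor
  · rintro ⟨h, hlt⟩
    exact ⟨h, (lowPerm_lt_iff hj σ _ _).mp hlt⟩
  · rintro ⟨h, hlt⟩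
    exact ⟨h, (lowPerm_lt_iff hj σ _ _).mpr hlt⟩

lemma descCond_transfer (hj : j ≤ n) (T : ℕ → Prop) (hTj : T j)
    (hT : ∀ x, T x → x < n → x ≤ j) (σ : Equiv.Perm (Fin n)) :
    (∀ p : Fin n, p ∈ descSet σ → T ((p : ℕ) + 1)) ↔
      (MonoTop j σ ∧ ∀ p : Fin j, p ∈ descSet (lowPerm hj σ) → T ((p : ℕ) + 1)) := by
  constructor
  · intro hcond
    have hmono : MonoTop j σ := by
      apply monoTop_of_no_desc
      intro p hjp hp
      have hT1 := hcond p hp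
      have hlt : (p : ℕ) + 1 < n := ((mem_descSet_iff σ p).mp hp).1
      have := hT _ hT1 hlt
      omega
    refine ⟨hmono, ?_⟩
    intro p hp
    rw [descSet_lowPerm_iff hj σ p] at hp
    obtain ⟨h, hlt⟩ := hp
    have hpn : (p : ℕ) < n := by omega
    have hdesc : (⟨(p : ℕ), hpn⟩ : Fin n) ∈ descSet σ := by
      rw [mem_descSet_iff]
      exact ⟨show (p : ℕ) + 1 < n by omega, hlt⟩
    exact hcond _ hdesc
  · rintro ⟨hmono, hlow⟩ p hp
    rw [mem_descSet_iff] at hp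
    obtain ⟨h, hlt⟩ := hp
    have hpj : (p : ℕ) < j := by
      by_contra hc
      have := hmono p ⟨(p : ℕ) + 1, h⟩ (by omega)
        (show (p : ℕ) < (p : ℕ) + 1 from Nat.lt_succ_self _)
      exact absurd hlt (not_lt.mpr (le_of_lt this))
    rcases eq_or_lt_of_le (show (p : ℕ) + 1 ≤ j by omega) with he | hlt2
    · rw [he]; exact hTj
    · have hplt : (p : ℕ) < j := by omega
      have hmem : (⟨(p : ℕ), hplt⟩ : Fin j) ∈ descSet (lowPerm hj σ) := by
        rw [descSet_lowPerm_iff]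
        exact ⟨hlt2, hlt⟩
      exact hlow _ hmem
end Aux2

section Aux3

variable {n j : ℕ}

lemma one_not_mem_descSet (m : ℕ) (p : Fin m) : p ∉ descSet (1 : Equiv.Perm (Fin m)) := by
  rw [mem_descSet_iff]
  rintro ⟨h, hlt⟩
  have h2 : (⟨(p : ℕ) + 1, h⟩ : Fin m) < p := by simpa using hlt
  have h3 : (p : ℕ) + 1 < (p : ℕ) := h2
  omega

lemma eq_one_of_monoTop_zero (m : ℕ) (σ : Equiv.Perm (Fin m)) (h : MonoTop 0 σ) : σ = 1 := by
  have hsm : StrictMono ⇑σ := fun a b hab => h a b (Nat.zero_le _) hab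
  have hsm' : StrictMono ⇑σ⁻¹ := by
    intro a b hab
    rw [← hsm.lt_iff_lt]
    simpa using hab
  have inst : WellFoundedLT (Fin m) := inferInstance
  refine Equiv.ext fun x => ?_
  have h1 : x ≤ σ x := hsm.le_apply
  have h2 : x ≤ σ⁻¹ x := hsm'.le_apply
  have h3 : σ x ≤ σ (σ⁻¹ x) := hsm.monotone h2
  rw [← Equiv.Perm.mul_apply, mul_inv_cancel, Equiv.Perm.one_apply] at h3
  simp only [Equiv.Perm.one_apply]
  exact le_antisymm h3 h1

lemma card_subsets (m c : ℕ) : Nat.card {B : Finset (Fin m) // B.card = c} = m.choose c := by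
  rw [Nat.card_eq_fintype_card, Fintype.card_finset_len, Fintype.card_fin]

lemma Mlem (k : ℕ) : ∀ (s : Fin (k + 1) → ℕ), StrictMono s → (∀ m, 1 ≤ s m) →
    Nat.card {σ : Equiv.Perm (Fin (s (Fin.last k))) //
      ∀ p : Fin (s (Fin.last k)), p ∈ descSet σ → ∃ a : Fin (k + 1), s a = (p : ℕ) + 1} =
    ∏ m : Fin k, (s m.succ).choose (s m.castSucc) := by
  induction k with
  | zero =>
    intro s _ _
    rw [Finset.univ_eq_empty, Finset.prod_empty]
    rw [Nat.card_eq_one_iff_unique]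
    constructor
    · constructor
      rintro ⟨σ1, hσ1⟩ ⟨σ2, hσ2⟩
      have key : ∀ σ : Equiv.Perm (Fin (s (Fin.last 0))),
          (∀ p : Fin (s (Fin.last 0)), p ∈ descSet σ → ∃ a : Fin 1, s a = (p : ℕ) + 1) →
          σ = 1 := by
        intro σ hσ
        apply eq_one_of_monoTop_zero
        apply monoTop_of_no_desc
        intro p _ hp
        obtain ⟨a, ha⟩ := hσ p hp
        have ha0 : a = Fin.last 0 := Subsingleton.elim _ _
        have hlt := ((mem_descSet_iff σ p).mp hp).1
        rw [ha0] at ha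
        omega
      exact Subtype.ext ((key σ1 hσ1).trans (key σ2 hσ2).symm)
    · exact ⟨⟨1, fun p hp => absurd hp (one_not_mem_descSet _ p)⟩⟩
  | succ k ih =>
    intro s hsm hs1
    have hjn : s ((Fin.last k).castSucc) < s (Fin.last (k + 1)) := by
      apply hsm
      exact Fin.castSucc_lt_last (Fin.last k)
    have hj : s ((Fin.last k).castSucc) ≤ s (Fin.last (k + 1)) := le_of_lt hjn
    have htrans := descCond_transfer hj (fun x => ∃ a : Fin (k + 2), s a = x)
      ⟨(Fin.last k).castSucc, rfl⟩
      (by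
        rintro x ⟨a, rfl⟩ hx
        rcases Fin.eq_castSucc_or_eq_last a with ⟨b, rfl⟩ | rfl
        · exact hsm.monotone (by
            rw [Fin.le_def]
            have := b.isLt
            simp [Fin.lt_def]
            omega)
        · omega)
    have step1 : Nat.card {σ : Equiv.Perm (Fin (s (Fin.last (k + 1)))) //
        ∀ p : Fin (s (Fin.last (k + 1))), p ∈ descSet σ → ∃ a : Fin (k + 2), s a = (p : ℕ) + 1} =
        Nat.card {σ : Equiv.Perm (Fin (s (Fin.last (k + 1)))) //
          MonoTop (s ((Fin.last k).castSucc)) σ ∧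
          (fun σ' : Equiv.Perm (Fin (s ((Fin.last k).castSucc))) =>
            ∀ p : Fin (s ((Fin.last k).castSucc)), p ∈ descSet σ' →
              ∃ a : Fin (k + 2), s a = (p : ℕ) + 1) (lowPerm hj σ) ∧
          (fun _ : Finset (Fin (s (Fin.last (k + 1)))) => True) (topSet (s ((Fin.last k).castSucc)) σ)} := by
      apply Nat.card_congr
      apply Equiv.subtypeEquivRight
      intro σ
      constructor
      · intro hc
        obtain ⟨h1, h2⟩ := (htrans σ).mp hc
        exact ⟨h1, h2, trivial⟩
      · rintro ⟨h1, h2, _⟩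
        exact (htrans σ).mpr ⟨h1, h2⟩
    rw [step1, master hj
      (fun σ' : Equiv.Perm (Fin (s ((Fin.last k).castSucc))) =>
        ∀ p : Fin (s ((Fin.last k).castSucc)), p ∈ descSet σ' →
          ∃ a : Fin (k + 2), s a = (p : ℕ) + 1)
      (fun _ : Finset (Fin (s (Fin.last (k + 1)))) => True)]
    have low_eq : Nat.card {σ' : Equiv.Perm (Fin (s ((Fin.last k).castSucc))) //
        ∀ p : Fin (s ((Fin.last k).castSucc)), p ∈ descSet σ' →
          ∃ a : Fin (k + 2), s a = (p : ℕ) + 1} =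
        ∏ m : Fin k, ((s ∘ Fin.castSucc) m.succ).choose ((s ∘ Fin.castSucc) m.castSucc) := by
      rw [← ih (s ∘ Fin.castSucc)
        (fun a b hab => hsm (by rwa [Fin.castSucc_lt_castSucc_iff]))
        (fun m => hs1 _)]
      apply Nat.card_congr
      apply Equiv.subtypeEquivRight
      intro σ'
      constructor
      · intro hc p hp
        obtain ⟨a, ha⟩ := hc p hp
        rcases Fin.eq_castSucc_or_eq_last a with ⟨b, rfl⟩ | rfl
        · exact ⟨b, ha⟩
        · exfalso
          have := p.isLt
          omega
      · intro hc p hp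
        obtain ⟨b, hb⟩ := hc p hp
        exact ⟨b.castSucc, hb⟩
    have top_eq : Nat.card {B : Finset (Fin (s (Fin.last (k + 1)))) //
        B.card = s (Fin.last (k + 1)) - s ((Fin.last k).castSucc) ∧
        (fun _ : Finset (Fin (s (Fin.last (k + 1)))) => True) B} =
        (s (Fin.last (k + 1))).choose (s ((Fin.last k).castSucc)) := by
      rw [Nat.card_congr (Equiv.subtypeEquivRight (q := fun B : Finset (Fin (s (Fin.last (k + 1)))) =>
        B.card = s (Fin.last (k + 1)) - s ((Fin.last k).castSucc)) (fun B => and_iff_left trivial))]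
      rw [card_subsets, Nat.choose_symm hj]
    rw [low_eq, top_eq]
    rw [Fin.prod_univ_castSucc (f := fun m : Fin (k + 1) => (s m.succ).choose (s m.castSucc))]
    congr 1

end Aux3

section Aux4

variable {n j : ℕ}

lemma Dlem (m v c : ℕ) (hv : v < m) :
    Nat.card {B : Finset (Fin m) // B.card = c + 1 ∧
      ((⟨v, hv⟩ : Fin m) ∈ B ∧ ∀ b ∈ B, b ≤ ⟨v, hv⟩)} = v.choose c := by
  rw [← card_subsets v c]
  refine (Nat.card_eq_of_bijective
    (fun C : {C : Finset (Fin v) // C.card = c} =>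
      (⟨insert ⟨v, hv⟩ (C.1.map (Fin.castLEEmb (le_of_lt hv))), ?_, ?_, ?_⟩ :
        {B : Finset (Fin m) // B.card = c + 1 ∧
          ((⟨v, hv⟩ : Fin m) ∈ B ∧ ∀ b ∈ B, b ≤ ⟨v, hv⟩)}))
    ⟨?_, ?_⟩).symm
  · -- card
    rw [Finset.card_insert_of_notMem, Finset.card_map, C.2]
    intro hmem
    obtain ⟨y, _, hy⟩ := Finset.mem_map.mp hmem
    have : (y : ℕ) = v := congrArg Fin.val hy
    have := y.isLt
    omega
  · exact Finset.mem_insert_self _ _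
  · intro b hb
    rcases Finset.mem_insert.mp hb with rfl | hb
    · exact le_refl _
    · obtain ⟨y, _, hy⟩ := Finset.mem_map.mp hb
      have h1 : (b : ℕ) = (y : ℕ) := (congrArg Fin.val hy).symm
      have := y.isLt
      show (b : ℕ) ≤ v
      omega
  · -- injective
    rintro ⟨C1, hC1⟩ ⟨C2, hC2⟩ heq
    have heq' := congrArg (Subtype.val) heq
    simp only at heq'
    have hni : ∀ C : Finset (Fin v),
        (⟨v, hv⟩ : Fin m) ∉ C.map (Fin.castLEEmb (le_of_lt hv)) := by
      intro C hmem
      obtain ⟨y, _, hy⟩ := Finset.mem_map.mp hmem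
      have : (y : ℕ) = v := congrArg Fin.val hy
      have := y.isLt
      omega
    have h2 := congrArg (fun S => Finset.erase S (⟨v, hv⟩ : Fin m)) heq'
    simp only [Finset.erase_insert (hni C1), Finset.erase_insert (hni C2)] at h2
    have h3 := Finset.map_injective (Fin.castLEEmb (le_of_lt hv)) h2
    exact Subtype.ext h3
  · -- surjective
    rintro ⟨B, hcard, hmem, hbound⟩
    have hsub : ∀ a ∈ (B.erase ⟨v, hv⟩).image Fin.val, a < v := by
      intro a ha
      obtain ⟨b, hb, rfl⟩ := Finset.mem_image.mp ha
      have h1 := Finset.mem_of_mem_erase hb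
      have h2 := Finset.ne_of_mem_erase hb
      have h3 : (b : ℕ) ≤ v := hbound b h1
      rcases lt_or_eq_of_le h3 with h | h
      · exact h
      · exact absurd (Fin.ext h) h2
    refine ⟨⟨((B.erase ⟨v, hv⟩).image Fin.val).attachFin hsub, ?_⟩, ?_⟩
    · rw [Finset.card_attachFin, Finset.card_image_of_injective _ Fin.val_injective,
        Finset.card_erase_of_mem hmem, hcard]
      omega
    · apply Subtype.ext
      simp only
      have hmap : (((B.erase ⟨v, hv⟩).image Fin.val).attachFin hsub).map
          (Fin.castLEEmb (le_of_lt hv)) = B.erase ⟨v, hv⟩ := by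
        ext x
        constructor
        · intro hx
          obtain ⟨y, hy, rfl⟩ := Finset.mem_map.mp hx
          have hy' : (y : ℕ) ∈ (B.erase ⟨v, hv⟩).image Fin.val := (Finset.mem_attachFin hsub).mp hy
          obtain ⟨b, hb, hbv⟩ := Finset.mem_image.mp hy'
          have hbc : b = (Fin.castLEEmb (le_of_lt hv)) y := Fin.ext hbv
          rwa [← hbc]
        · intro hx
          have hxv : (x : ℕ) < v := by
            have h3 : (x : ℕ) ≤ v := hbound x (Finset.mem_of_mem_erase hx)
            rcases lt_or_eq_of_le h3 with h | h
            · exact h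
            · exact absurd (Fin.ext h) (Finset.ne_of_mem_erase hx)
          refine Finset.mem_map.mpr ⟨⟨(x : ℕ), hxv⟩, ?_, ?_⟩
          · exact (Finset.mem_attachFin hsub).mpr (Finset.mem_image.mpr ⟨x, hx, rfl⟩)
          · exact Fin.ext rfl
      rw [hmap, Finset.insert_erase hmem]

lemma monoTop_last_iff (hjn : j < n) (σ : Equiv.Perm (Fin n)) (hmono : MonoTop j σ)
    (v : Fin n) :
    σ ⟨n - 1, by omega⟩ = v ↔ (v ∈ topSet j σ ∧ ∀ b ∈ topSet j σ, b ≤ v) := by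
  have hlastmem : σ ⟨n - 1, by omega⟩ ∈ topSet j σ :=
    mem_topSet.mpr ⟨⟨n - 1, by omega⟩, show j ≤ n - 1 by omega, rfl⟩
  constructor
  · intro h
    refine ⟨h ▸ hlastmem, ?_⟩
    intro b hb
    obtain ⟨p, hp, rfl⟩ := mem_topSet.mp hb
    rcases eq_or_lt_of_le (show (p : ℕ) ≤ n - 1 by have := p.isLt; omega) with he | hlt
    · have : p = ⟨n - 1, by omega⟩ := Fin.ext he
      rw [this, h]
    · have := hmono p ⟨n - 1, by omega⟩ hp (show (p : ℕ) < n - 1 from hlt)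
      rw [h] at this
      exact le_of_lt this
  · rintro ⟨hvmem, hbound⟩
    obtain ⟨p, hp, hpv⟩ := mem_topSet.mp hvmem
    have h1 : σ ⟨n - 1, by omega⟩ ≤ v := hbound _ hlastmem
    rcases eq_or_lt_of_le (show (p : ℕ) ≤ n - 1 by have := p.isLt; omega) with he | hlt
    · rw [← hpv]
      exact congrArg σ (Fin.ext he).symm
    · exfalso
      have h2 := hmono p ⟨n - 1, by omega⟩ hp (show (p : ℕ) < n - 1 from hlt)
      have h3 : v < σ ⟨n - 1, by omega⟩ := lt_of_le_of_lt (le_of_eq hpv.symm) h2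
      exact absurd h1 (not_le.mpr h3)

end Aux4

/-- For `d ≥ 1`, a subset `S = {s_0 < s_1 < … < s_k} ⊆ {1,…,d}` (with `k+1`
elements, given as a strictly increasing list `s`), and `0 ≤ r ≤ d`, the number
of permutations `σ ∈ S_{d+1}` with descent set contained in `S` and
`σ(d+1) = d+1-r` equals the multinomial coefficient
`binom(s_k; s_k-s_{k-1}, …, s_1-s_0, s_0)`, written as the telescoping product
`∏_m binom(s_{m+1}, s_m)`, times `binom(d-r, d-s_k)`. -/
theorem descents_in_S_count (d k r : ℕ) (hd : 1 ≤ d) (hr : r ≤ d)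
    (s : Fin (k + 1) → ℕ) (hmono : StrictMono s)
    (hs : ∀ m, 1 ≤ s m ∧ s m ≤ d) :
    Nat.card {σ : Equiv.Perm (Fin (d + 1)) //
        (∀ p : Fin (d + 1), p ∈ descSet σ → ∃ a : Fin (k + 1), s a = (p : ℕ) + 1) ∧
        ∀ q : Fin (d + 1), (q : ℕ) = d → (σ q : ℕ) + 1 + r = d + 1} =
      (∏ m : Fin k, (s m.succ).choose (s m.castSucc)) *
        ((d - r).choose (d - s (Fin.last k))) := by
  have hjd : s (Fin.last k) ≤ d := (hs (Fin.last k)).2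
  have hj : s (Fin.last k) ≤ d + 1 := by omega
  have hjn : s (Fin.last k) < d + 1 := by omega
  have hvd : d - r < d + 1 := by omega
  have htrans := descCond_transfer hj (fun x => ∃ a : Fin (k + 1), s a = x)
    ⟨Fin.last k, rfl⟩
    (by
      rintro x ⟨a, rfl⟩ _
      exact hmono.monotone (Fin.le_last a))
  have step1 : Nat.card {σ : Equiv.Perm (Fin (d + 1)) //
      (∀ p : Fin (d + 1), p ∈ descSet σ → ∃ a : Fin (k + 1), s a = (p : ℕ) + 1) ∧
      ∀ q : Fin (d + 1), (q : ℕ) = d → (σ q : ℕ) + 1 + r = d + 1} =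
      Nat.card {σ : Equiv.Perm (Fin (d + 1)) //
        MonoTop (s (Fin.last k)) σ ∧
        (fun σ' : Equiv.Perm (Fin (s (Fin.last k))) =>
          ∀ p : Fin (s (Fin.last k)), p ∈ descSet σ' →
            ∃ a : Fin (k + 1), s a = (p : ℕ) + 1) (lowPerm hj σ) ∧
        (fun B : Finset (Fin (d + 1)) =>
          (⟨d - r, hvd⟩ : Fin (d + 1)) ∈ B ∧ ∀ b ∈ B, b ≤ ⟨d - r, hvd⟩)
          (topSet (s (Fin.last k)) σ)} := by
    apply Nat.card_congr
    apply Equiv.subtypeEquivRight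
    intro σ
    constructor
    · rintro ⟨h1, h2⟩
      obtain ⟨hm, hlow⟩ := (htrans σ).mp h1
      refine ⟨hm, hlow, ?_⟩
      have hlast : σ ⟨d, by omega⟩ = ⟨d - r, hvd⟩ := by
        have := h2 ⟨d, by omega⟩ rfl
        exact Fin.ext (show (σ (⟨d, by omega⟩ : Fin (d + 1)) : ℕ) = d - r by omega)
      have hlast' : σ ⟨d + 1 - 1, by omega⟩ = ⟨d - r, hvd⟩ := hlast
      exact (monoTop_last_iff hjn σ hm ⟨d - r, hvd⟩).mp hlast'
    · rintro ⟨hm, hlow, hQ⟩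
      refine ⟨(htrans σ).mpr ⟨hm, hlow⟩, ?_⟩
      intro q hq
      have hlast := (monoTop_last_iff hjn σ hm ⟨d - r, hvd⟩).mpr hQ
      have hlast' : σ ⟨d, by omega⟩ = ⟨d - r, hvd⟩ := hlast
      have hqe : q = ⟨d, by omega⟩ := Fin.ext hq
      rw [hqe, hlast']
      show (d - r) + 1 + r = d + 1
      omega
  rw [step1, master hj
    (fun σ' : Equiv.Perm (Fin (s (Fin.last k))) =>
      ∀ p : Fin (s (Fin.last k)), p ∈ descSet σ' →
        ∃ a : Fin (k + 1), s a = (p : ℕ) + 1)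
    (fun B : Finset (Fin (d + 1)) =>
      (⟨d - r, hvd⟩ : Fin (d + 1)) ∈ B ∧ ∀ b ∈ B, b ≤ ⟨d - r, hvd⟩)]
  have hcc : d + 1 - s (Fin.last k) = (d - s (Fin.last k)) + 1 := by omega
  rw [hcc, Mlem k s hmono (fun m => (hs m).1),
    Dlem (d + 1) (d - r) (d - s (Fin.last k)) hvd]
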